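/- arXiv:2108.03022 — 2 statements merged into one kernel-verified Lean document; each statement's English description precedes it below -/
import Mathlib

section
/- Let F be a 3-CNF formula over a finite variable set V and let Π_F be the associated ELP. Then the map M ↦ {v : v ∈ M} ∪ {¬v : v ∈ V \ M} is a bijection from the models of F onto the plausible WVIs of Π_F over V; in particular, the number of WVIs I over V with I ⊨_p Π_F equals the number of models of F. (This is the correctness of the reduction used in the hardness part of the Proposition stating that counting plausible WVIs of an ELP is #P-complete.) -/
/- Formalization of epistemic logic programs (ELPs), following the paper
   "Utilizing Treewidth for Quantitative Reasoning on Epistemic Logic Programs". -/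

namespace ELP

variable {α : Type}

/-- A literal over atoms `α`: an atom together with a polarity
    (`true` = the atom itself, `false` = its classical negation `¬a`). -/
abbrev Lit (α : Type) := α × Bool

/-- A rule of a plain (disjunctive) logic program:
    `a₁ ∨ … ∨ a_k ← a_{k+1}, …, a_m, ¬a_{m+1}, …, ¬a_n`. -/
structure PRule (α : Type) where
  head : Set α
  bpos : Set α
  bneg : Set α

/-- An interpretation `I` satisfies a rule `r` if `(H_r ∪ B⁻_r) ∩ I ≠ ∅` or `B⁺_r ⊄ I`. -/
def PRule.SatBy (r : PRule α) (I : Set α) : Prop :=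
  ((r.head ∪ r.bneg) ∩ I).Nonempty ∨ ¬ r.bpos ⊆ I

/-- `I` is a model of the program `P`. -/
def IsModelOf (I : Set α) (P : Set (PRule α)) : Prop := ∀ r ∈ P, r.SatBy I

/-- The Gelfond–Lifschitz reduct `P^I`: drop rules whose negative body intersects `I`,
    and delete the negative bodies of the remaining rules. -/
def glReduct (P : Set (PRule α)) (I : Set α) : Set (PRule α) :=
  { r' | ∃ r ∈ P, r.bneg ∩ I = ∅ ∧ r' = ⟨r.head, r.bpos, ∅⟩ }

/-- `I` is an answer set of `P` if it is a ⊆-minimal model of the GL reduct `P^I`. -/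
def IsAnswerSet (P : Set (PRule α)) (I : Set α) : Prop :=
  IsModelOf I (glReduct P I) ∧ ∀ J ⊆ I, IsModelOf J (glReduct P I) → J = I

/-- `AS(P)`, the set of answer sets of `P`. -/
def answerSets (P : Set (PRule α)) : Set (Set α) := { I | IsAnswerSet P I }

/-- A rule of an epistemic logic program (ELP):
    `a₁ ∨ … ∨ a_k ← ℓ_{k+1}, …, ℓ_m, ξ_{m+1}, …, ξ_j, ¬ξ_{j+1}, …, ¬ξ_n`,
    where the objective literals `ℓ_i` are split into positive (`bpos`) and negative
    (`bneg`) body atoms, `epos` are the epistemic literals `not ℓ` occurring positively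
    and `eneg` those occurring under classical negation `¬`. -/
structure ERule (α : Type) where
  head : Set α
  bpos : Set α
  bneg : Set α
  epos : Set (Lit α)
  eneg : Set (Lit α)

/-- `ex-ats(r)`: the atoms occurring in epistemic literals of `r`. -/
def ERule.exats (r : ERule α) : Set α := Prod.fst '' (r.epos ∪ r.eneg)

/-- `ats(r)`: all atoms occurring in `r`. -/
def ERule.ats (r : ERule α) : Set α := r.head ∪ r.bpos ∪ r.bneg ∪ r.exats

/-- `ax-ats(r) = ats(r) \ ex-ats(r)`: the non-epistemic atoms of `r`. -/
def ERule.axats (r : ERule α) : Set α := r.ats \ r.exats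

/-- A rule is purely-epistemic if `ax-ats(r) = ∅`. -/
def ERule.PurelyEpistemic (r : ERule α) : Prop := r.axats = ∅

/-- Well-formedness of an ELP rule, reflecting that in
    `a₁ ∨ … ∨ a_k ← ℓ_{k+1}, …, ℓ_m, ξ_{m+1}, …, ξ_n` the atoms `a₁, …, a_n`
    are distinct (in particular the head/body atoms are disjoint from the
    epistemic atoms) and that rules are finite objects. -/
def ERule.Wf (r : ERule α) : Prop :=
  (r.head ∪ r.bpos ∪ r.bneg) ∩ r.exats = ∅ ∧
  r.head ∩ r.bpos = ∅ ∧ r.head ∩ r.bneg = ∅ ∧ r.bpos ∩ r.bneg = ∅ ∧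
  r.ats.Finite

/-- `ex-ats(Π)`. -/
def elpExats (P : Set (ERule α)) : Set α := ⋃ r ∈ P, r.exats

/-- `ats(Π)`. -/
def elpAts (P : Set (ERule α)) : Set α := ⋃ r ∈ P, r.ats

/-- The purely-epistemic part `Π_pe = {r ∈ Π : ax-ats(r) = ∅}` of `Π`. -/
def peParts (P : Set (ERule α)) : Set (ERule α) := { r ∈ P | r.PurelyEpistemic }

/-- All rules of the ELP are well-formed. -/
def WfELP (P : Set (ERule α)) : Prop := ∀ r ∈ P, r.Wf

/-- A world view interpretation (WVI) over a set `A` of atoms: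
    a consistent set of literals over `A`. -/
def IsWVI (A : Set α) (I : Set (Lit α)) : Prop :=
  (∀ l ∈ I, l.1 ∈ A) ∧ ∀ a : α, ¬ ((a, true) ∈ I ∧ (a, false) ∈ I)

/-- The restriction `I|X` of a set of literals `I` to literals over atoms in `X`. -/
def restrict (I : Set (Lit α)) (X : Set α) : Set (Lit α) := { l ∈ I | l.1 ∈ X }

/-- The epistemic reduct `Π^I`: each epistemic literal `not ℓ` is replaced by `⊥`
    if `ℓ ∈ I` and by `⊤` otherwise.  A rule survives (with its epistemic literals
    deleted) iff no body occurrence becomes `⊥`, i.e. iff `ℓ ∉ I` for every positive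
    epistemic literal `not ℓ` and `ℓ ∈ I` for every epistemic literal `not ℓ`
    occurring under classical negation `¬`. -/
def ereduct (P : Set (ERule α)) (I : Set (Lit α)) : Set (PRule α) :=
  { r' | ∃ r ∈ P, (∀ l ∈ r.epos, l ∉ I) ∧ (∀ l ∈ r.eneg, l ∈ I) ∧
         r' = ⟨r.head, r.bpos, r.bneg⟩ }

/-- `I ⊨_p Π`: the WVI `I` is plausible for `Π`, i.e. `AS(Π_pe^I) ≠ ∅`. -/
def PlausibleFor (P : Set (ERule α)) (I : Set (Lit α)) : Prop :=
  (answerSets (ereduct (peParts P) I)).Nonempty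

/-- Compatibility of a WVI `I` over `A` with a set `Js` of interpretations. -/
def Compatible (A : Set α) (I : Set (Lit α)) (Js : Set (Set α)) : Prop :=
  Js.Nonempty ∧
  (∀ a : α, (a, true) ∈ I → ∀ J ∈ Js, a ∈ J) ∧
  (∀ a : α, (a, false) ∈ I → ∀ J ∈ Js, a ∉ J) ∧
  (∀ a ∈ A, (a, true) ∉ I → (a, false) ∉ I →
    (∃ J ∈ Js, a ∈ J) ∧ ∃ J' ∈ Js, a ∉ J')

/-- `W` is a world view of `Π`: a WVI over `ats(Π)` compatible with `AS(Π^W)`. -/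
def IsWorldView (P : Set (ERule α)) (W : Set (Lit α)) : Prop :=
  IsWVI (elpAts P) W ∧ Compatible (elpAts P) W (answerSets (ereduct P W))

/-- A 3-clause is a disjunction of three literals. -/
abbrev Clause (α : Type) := Lit α × Lit α × Lit α

/-- The atoms of a clause. -/
def clauseAtoms (c : Clause α) : Set α := {c.1.1, c.2.1.1, c.2.2.1}

/-- A literal is true under the assignment `M` (the set of true variables). -/
def LitTrue (M : Set α) (l : Lit α) : Prop := if l.2 then l.1 ∈ M else l.1 ∉ M

/-- `M ⊆ V` is a model of the 3-CNF `F`: every clause contains a true literal. -/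
def IsCnfModel (V : Set α) (F : Set (Clause α)) (M : Set α) : Prop :=
  M ⊆ V ∧ ∀ c ∈ F, LitTrue M c.1 ∨ LitTrue M c.2.1 ∨ LitTrue M c.2.2

/-- The ELP `Π_F` associated with a 3-CNF `F` over variables `V`:
    a rule `← not v, not ¬v` for every `v ∈ V` and a rule
    `← not ℓ₁, not ℓ₂, not ℓ₃` for every clause `ℓ₁ ∨ ℓ₂ ∨ ℓ₃` of `F`. -/
def cnfELP (V : Set α) (F : Set (Clause α)) : Set (ERule α) :=
  { r | ∃ v ∈ V, r = ⟨∅, ∅, ∅, {(v, true), (v, false)}, ∅⟩ } ∪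
  { r | ∃ c ∈ F, r = ⟨∅, ∅, ∅, {c.1, c.2.1, c.2.2}, ∅⟩ }

/-- The WVI `I_M = {v : v ∈ M} ∪ {¬v : v ∈ V \ M}` induced by an assignment `M`. -/
def assignWVI (V M : Set α) : Set (Lit α) :=
  { l | (l.2 = true ∧ l.1 ∈ M) ∨ (l.2 = false ∧ l.1 ∈ V \ M) }

lemma empty_answer : (answerSets (∅ : Set (PRule α))).Nonempty := by
  refine ⟨∅, ?_, ?_⟩
  · rintro r ⟨r₀, hr₀, -⟩
    exact absurd hr₀ (Set.notMem_empty r₀)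
  · intro J hJ _
    exact Set.subset_empty_iff.mp hJ

lemma bot_no_answer {P : Set (PRule α)} (h : (⟨∅, ∅, ∅⟩ : PRule α) ∈ P) :
    answerSets P = ∅ := by
  ext I
  simp only [answerSets, Set.mem_setOf_eq, Set.mem_empty_iff_false, iff_false]
  rintro ⟨hm, -⟩
  have hb : (⟨∅, ∅, ∅⟩ : PRule α) ∈ glReduct P I :=
    ⟨_, h, by simp, rfl⟩
  have := hm _ hb
  simp [PRule.SatBy] at this

lemma pe_eq (V : Set α) (F : Set (Clause α)) :
    peParts (cnfELP V F) = cnfELP V F := by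
  ext r
  simp only [peParts, Set.mem_sep_iff, and_iff_left_iff_imp]
  intro hr
  rcases hr with ⟨v, hv, rfl⟩ | ⟨c, hc, rfl⟩ <;>
    simp [ERule.PurelyEpistemic, ERule.axats, ERule.ats]

lemma ered_shape {V : Set α} {F : Set (Clause α)} {I : Set (Lit α)} {r' : PRule α}
    (h : r' ∈ ereduct (cnfELP V F) I) : r' = ⟨∅, ∅, ∅⟩ := by
  rcases h with ⟨r, hr, -, -, rfl⟩
  rcases hr with ⟨v, hv, rfl⟩ | ⟨c, hc, rfl⟩ <;> rfl

lemma ered_empty_iff (V : Set α) (F : Set (Clause α)) (I : Set (Lit α)) :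
    ereduct (cnfELP V F) I = ∅ ↔
      (∀ v ∈ V, (v, true) ∈ I ∨ (v, false) ∈ I) ∧
      (∀ c ∈ F, c.1 ∈ I ∨ c.2.1 ∈ I ∨ c.2.2 ∈ I) := by
  rw [Set.eq_empty_iff_forall_notMem]
  constructor
  · intro h
    constructor
    · intro v hv
      by_contra hc
      push_neg at hc
      refine h ⟨∅, ∅, ∅⟩ ⟨⟨∅, ∅, ∅, {(v, true), (v, false)}, ∅⟩,
        Or.inl ⟨v, hv, rfl⟩, ?_, ?_, rfl⟩
      · intro l hl
        rcases hl with rfl | rfl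
        exacts [hc.1, hc.2]
      · intro l hl
        exact absurd hl (Set.notMem_empty l)
    · intro c hc
      by_contra hcc
      push_neg at hcc
      refine h ⟨∅, ∅, ∅⟩ ⟨⟨∅, ∅, ∅, {c.1, c.2.1, c.2.2}, ∅⟩,
        Or.inr ⟨c, hc, rfl⟩, ?_, ?_, rfl⟩
      · intro l hl
        rcases hl with rfl | rfl | rfl
        exacts [hcc.1, hcc.2.1, hcc.2.2]
      · intro l hl
        exact absurd hl (Set.notMem_empty l)
  · rintro ⟨h1, h2⟩ r' ⟨r, hr, hpos, -, rfl⟩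
    rcases hr with ⟨v, hv, rfl⟩ | ⟨c, hc, rfl⟩
    · rcases h1 v hv with h | h
      · exact hpos _ (Or.inl rfl) h
      · exact hpos _ (Or.inr rfl) h
    · rcases h2 c hc with h | h | h
      · exact hpos _ (Or.inl rfl) h
      · exact hpos _ (Or.inr (Or.inl rfl)) h
      · exact hpos _ (Or.inr (Or.inr rfl)) h

lemma plausible_iff (V : Set α) (F : Set (Clause α)) (I : Set (Lit α)) :
    PlausibleFor (cnfELP V F) I ↔
      (∀ v ∈ V, (v, true) ∈ I ∨ (v, false) ∈ I) ∧
      (∀ c ∈ F, c.1 ∈ I ∨ c.2.1 ∈ I ∨ c.2.2 ∈ I) := by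
  rw [PlausibleFor, pe_eq, ← ered_empty_iff V F I]
  constructor
  · intro h
    by_contra hne
    obtain ⟨r', hr'⟩ := Set.nonempty_iff_ne_empty.mpr hne
    have hbot : (⟨∅, ∅, ∅⟩ : PRule α) ∈ ereduct (cnfELP V F) I :=
      ered_shape hr' ▸ hr'
    rw [bot_no_answer hbot] at h
    exact Set.not_nonempty_empty h
  · intro h
    rw [h]
    exact empty_answer

lemma mem_assignWVI_true {V M : Set α} {a : α} :
    (a, true) ∈ assignWVI V M ↔ a ∈ M := by simp [assignWVI]

lemma mem_assignWVI_false {V M : Set α} {a : α} :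
    (a, false) ∈ assignWVI V M ↔ a ∈ V \ M := by simp [assignWVI]

/-- The map `M ↦ I_M` is a bijection from the models of `F` onto the
    plausible WVIs of `Π_F` over `V`; in particular the number of plausible WVIs of
    `Π_F` over `V` equals the number of models of `F`. -/
theorem cnf_reduction_bijection (V : Set α) (hV : V.Finite)
    (F : Set (Clause α)) (hF : F.Finite) (hFV : ∀ c ∈ F, clauseAtoms c ⊆ V) :
    Set.BijOn (fun M => assignWVI V M)
      { M : Set α | IsCnfModel V F M }
      { I : Set (Lit α) | IsWVI V I ∧ PlausibleFor (cnfELP V F) I } ∧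
    { I : Set (Lit α) | IsWVI V I ∧ PlausibleFor (cnfELP V F) I }.ncard =
      { M : Set α | IsCnfModel V F M }.ncard := by
  have hmaps : ∀ M ∈ { M : Set α | IsCnfModel V F M },
      assignWVI V M ∈ { I : Set (Lit α) | IsWVI V I ∧ PlausibleFor (cnfELP V F) I } := by
    rintro M ⟨hMV, hMc⟩
    refine ⟨⟨?_, ?_⟩, ?_⟩
    · rintro ⟨a, b⟩ hl
      rcases hl with ⟨-, ha⟩ | ⟨-, ha⟩
      · exact hMV ha
      · exact ha.1
    · rintro a ⟨h1, h2⟩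
      exact (mem_assignWVI_false.mp h2).2 (mem_assignWVI_true.mp h1)
    · rw [plausible_iff]
      constructor
      · intro v hv
        by_cases hvM : v ∈ M
        · exact Or.inl (mem_assignWVI_true.mpr hvM)
        · exact Or.inr (mem_assignWVI_false.mpr ⟨hv, hvM⟩)
      · intro c hc
        have hlit : ∀ l : Lit α, l.1 ∈ V → LitTrue M l → l ∈ assignWVI V M := by
          rintro ⟨a, b⟩ ha ht
          cases b
          · exact mem_assignWVI_false.mpr ⟨ha, by simpa [LitTrue] using ht⟩
          · exact mem_assignWVI_true.mpr (by simpa [LitTrue] using ht)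
        have hats := hFV c hc
        rcases hMc c hc with h | h | h
        · exact Or.inl (hlit _ (hats (by simp [clauseAtoms])) h)
        · exact Or.inr (Or.inl (hlit _ (hats (by simp [clauseAtoms])) h))
        · exact Or.inr (Or.inr (hlit _ (hats (by simp [clauseAtoms])) h))
  have hinj : Set.InjOn (fun M => assignWVI V M) { M : Set α | IsCnfModel V F M } := by
    intro M₁ _ M₂ _ h
    have h' : assignWVI V M₁ = assignWVI V M₂ := h
    ext a
    rw [← @mem_assignWVI_true α V M₁, ← @mem_assignWVI_true α V M₂, h']
  have hsurj : Set.SurjOn (fun M => assignWVI V M) { M : Set α | IsCnfModel V F M }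
      { I : Set (Lit α) | IsWVI V I ∧ PlausibleFor (cnfELP V F) I } := by
    rintro I ⟨⟨hIV, hIcons⟩, hIp⟩
    rw [plausible_iff] at hIp
    set M : Set α := { a | (a, true) ∈ I } with hM
    have hMV : M ⊆ V := fun a ha => hIV _ ha
    have hlitT : ∀ l : Lit α, l ∈ I → LitTrue M l := by
      rintro ⟨a, b⟩ hl
      cases b
      · intro haM
        exact hIcons a ⟨haM, hl⟩
      · exact hl
    refine ⟨M, ⟨hMV, ?_⟩, ?_⟩
    · intro c hc
      rcases hIp.2 c hc with h | h | h
      · exact Or.inl (hlitT _ h)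
      · exact Or.inr (Or.inl (hlitT _ h))
      · exact Or.inr (Or.inr (hlitT _ h))
    · show assignWVI V M = I
      ext ⟨a, b⟩
      cases b
      · rw [mem_assignWVI_false]
        constructor
        · rintro ⟨haV, haM⟩
          rcases hIp.1 a haV with h | h
          · exact absurd h haM
          · exact h
        · intro h
          exact ⟨hIV _ h, fun haM => hIcons a ⟨haM, h⟩⟩
      · rw [mem_assignWVI_true]
        exact Iff.rfl
  have hbij : Set.BijOn (fun M => assignWVI V M)
      { M : Set α | IsCnfModel V F M }
      { I : Set (Lit α) | IsWVI V I ∧ PlausibleFor (cnfELP V F) I } :=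
    ⟨hmaps, hinj, hsurj⟩
  refine ⟨hbij, ?_⟩
  rw [← hbij.image_eq]
  exact Set.ncard_image_of_injOn hinj

end ELP
end

section
/- Product decomposition of plausible-WVI counts (correctness of the join step): Let Π_1 and Π_2 be ELPs, let X = ex-ats(Π_1) ∩ ex-ats(Π_2), and let J be a WVI over X. Then the map I ↦ (I|ex-ats(Π_1), I|ex-ats(Π_2)) is a bijection between {I : I a WVI over ex-ats(Π_1) ∪ ex-ats(Π_2), I|X = J, I ⊨_p Π_1 ∪ Π_2} and the set of pairs (I_1, I_2) with I_i a WVI over ex-ats(Π_i), I_i|X = J and I_i ⊨_p Π_i for i = 1, 2. Consequently, the number of WVIs I over ex-ats(Π_1) ∪ ex-ats(Π_2) with I|X = J and I ⊨_p Π_1 ∪ Π_2 equals the product of the corresponding counts for Π_1 and Π_2. -/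
/- Formalization of epistemic logic programs (ELPs), following the paper
   "Utilizing Treewidth for Quantitative Reasoning on Epistemic Logic Programs". -/

namespace ELP

variable {α : Type}

/-! ### Auxiliary lemmas for Statement 16 -/

lemma mem_restrict' {I : Set (Lit α)} {X : Set α} {l : Lit α} :
    l ∈ restrict I X ↔ l ∈ I ∧ l.1 ∈ X := Iff.rfl

lemma restrict_restrict (I : Set (Lit α)) (A B : Set α) :
    restrict (restrict I A) B = restrict I (A ∩ B) := by
  ext l; simp only [mem_restrict', Set.mem_inter_iff, and_assoc]

lemma restrict_union (I1 I2 : Set (Lit α)) (A : Set α) :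
    restrict (I1 ∪ I2) A = restrict I1 A ∪ restrict I2 A := by
  ext l; simp only [mem_restrict', Set.mem_union]; tauto

lemma restrict_eq_self {I : Set (Lit α)} {A : Set α} (h : ∀ l ∈ I, l.1 ∈ A) :
    restrict I A = I := by
  ext l; exact ⟨fun h => h.1, fun hl => ⟨hl, h l hl⟩⟩

lemma exats_subset {P : Set (ERule α)} {r : ERule α} (hr : r ∈ P) :
    r.exats ⊆ elpExats P := fun a ha => Set.mem_biUnion hr ha

lemma mem_exats_of_epos {r : ERule α} {l : Lit α} (h : l ∈ r.epos) :
    l.1 ∈ r.exats := ⟨l, Or.inl h, rfl⟩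

lemma mem_exats_of_eneg {r : ERule α} {l : Lit α} (h : l ∈ r.eneg) :
    l.1 ∈ r.exats := ⟨l, Or.inr h, rfl⟩

lemma elpExats_peParts_subset (P : Set (ERule α)) :
    elpExats (peParts P) ⊆ elpExats P := by
  intro a ha
  obtain ⟨r, hr, h⟩ := Set.mem_iUnion₂.mp ha
  exact Set.mem_biUnion hr.1 h

/-- The epistemic reduct only depends on the restriction of `I` to the
    epistemic atoms of `P`. -/
lemma ereduct_restrict (P : Set (ERule α)) (I : Set (Lit α)) {A : Set α}
    (h : elpExats P ⊆ A) : ereduct P (restrict I A) = ereduct P I := by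
  ext r'
  constructor <;> rintro ⟨r, hr, h1, h2, rfl⟩ <;> refine ⟨r, hr, ?_, ?_, rfl⟩
  · intro l hl hlI
    exact h1 l hl ⟨hlI, h (exats_subset hr (mem_exats_of_epos hl))⟩
  · intro l hl
    exact (h2 l hl).1
  · intro l hl hlI
    exact h1 l hl hlI.1
  · intro l hl
    exact ⟨h2 l hl, h (exats_subset hr (mem_exats_of_eneg hl))⟩

lemma peParts_union (P1 P2 : Set (ERule α)) :
    peParts (P1 ∪ P2) = peParts P1 ∪ peParts P2 := by
  ext r
  simp only [peParts, Set.mem_setOf_eq, Set.mem_union, Set.mem_sep_iff]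
  tauto

lemma ereduct_union (Q1 Q2 : Set (ERule α)) (I : Set (Lit α)) :
    ereduct (Q1 ∪ Q2) I = ereduct Q1 I ∪ ereduct Q2 I := by
  ext r'
  simp only [ereduct, Set.mem_setOf_eq, Set.mem_union]
  constructor
  · rintro ⟨r, (hr | hr), h1, h2, rfl⟩
    exacts [Or.inl ⟨r, hr, h1, h2, rfl⟩, Or.inr ⟨r, hr, h1, h2, rfl⟩]
  · rintro (⟨r, hr, h1, h2, rfl⟩ | ⟨r, hr, h1, h2, rfl⟩)
    exacts [⟨r, Or.inl hr, h1, h2, rfl⟩, ⟨r, Or.inr hr, h1, h2, rfl⟩]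

lemma answerSets_empty : answerSets (∅ : Set (PRule α)) = {∅} := by
  have hgl : ∀ I : Set α, glReduct (∅ : Set (PRule α)) I = ∅ := by
    intro I; ext r'; simp [glReduct]
  ext I
  simp only [answerSets, IsAnswerSet, Set.mem_setOf_eq, hgl, Set.mem_singleton_iff]
  constructor
  · rintro ⟨-, hmin⟩
    exact (hmin ∅ (Set.empty_subset I) (fun r hr => hr.elim)).symm
  · rintro rfl
    exact ⟨fun r hr => hr.elim, fun K hK _ => Set.subset_empty_iff.mp hK⟩

/-- A well-formed purely-epistemic rule has empty head and bodies. -/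
lemma pe_rule_empty {r : ERule α} (hwf : r.Wf) (hpe : r.PurelyEpistemic) :
    r.head = ∅ ∧ r.bpos = ∅ ∧ r.bneg = ∅ := by
  have hsub : r.head ∪ r.bpos ∪ r.bneg ⊆ r.exats := by
    intro a ha
    by_contra hne
    have hats : a ∈ r.ats := Or.inl ha
    have : a ∈ r.axats := ⟨hats, hne⟩
    rw [hpe] at this; exact this
  have hemp : r.head ∪ r.bpos ∪ r.bneg = ∅ := by
    apply Set.eq_empty_of_subset_empty
    intro a ha
    rw [← hwf.1]
    exact ⟨ha, hsub ha⟩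
  refine ⟨?_, ?_, ?_⟩ <;> apply Set.eq_empty_of_subset_empty <;>
    intro a ha <;> rw [← hemp]
  · exact Or.inl (Or.inl ha)
  · exact Or.inl (Or.inr ha)
  · exact Or.inr ha

/-- Plausibility is equivalent to emptiness of the epistemic reduct of the
    purely-epistemic part. -/
lemma plausible_iff_ereduct_empty {P : Set (ERule α)} (hwf : WfELP P)
    (I : Set (Lit α)) : PlausibleFor P I ↔ ereduct (peParts P) I = ∅ := by
  constructor
  · intro hpl
    by_contra hne
    obtain ⟨r', hr'⟩ := Set.nonempty_iff_ne_empty.mpr hne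
    obtain ⟨r, hr, he1, he2, hform⟩ := hr'
    obtain ⟨hh, hp, hn⟩ := pe_rule_empty (hwf r hr.1) hr.2
    obtain ⟨I0, hI0mod, -⟩ := hpl
    have hmem : (⟨r.head, r.bpos, (∅ : Set α)⟩ : PRule α) ∈
        glReduct (ereduct (peParts P) I) I0 :=
      ⟨r', ⟨r, hr, he1, he2, hform⟩, by rw [hform]; simp [hn], by rw [hform]⟩
    rcases hI0mod _ hmem with h | h
    · simp [hh, hn] at h
    · exact h (by rw [hp]; exact Set.empty_subset _)
  · intro he
    rw [PlausibleFor, he, answerSets_empty]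
    exact ⟨∅, rfl⟩

lemma plausible_restrict {P : Set (ERule α)} (I : Set (Lit α)) {A : Set α}
    (h : elpExats P ⊆ A) :
    PlausibleFor P (restrict I A) ↔ PlausibleFor P I := by
  unfold PlausibleFor
  rw [ereduct_restrict _ _ (subset_trans (elpExats_peParts_subset P) h)]

lemma plausible_union {P1 P2 : Set (ERule α)} (hwf1 : WfELP P1)
    (hwf2 : WfELP P2) (I : Set (Lit α)) :
    PlausibleFor (P1 ∪ P2) I ↔ PlausibleFor P1 I ∧ PlausibleFor P2 I := by
  have hwf : WfELP (P1 ∪ P2) := by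
    rintro r (h | h)
    exacts [hwf1 r h, hwf2 r h]
  rw [plausible_iff_ereduct_empty hwf, plausible_iff_ereduct_empty hwf1,
      plausible_iff_ereduct_empty hwf2, peParts_union, ereduct_union,
      Set.union_empty_iff]


/-- Product decomposition of plausible-WVI counts (correctness of
    the join step): the map `I ↦ (I|ex-ats(Π₁), I|ex-ats(Π₂))` is a bijection between
    the WVIs `I` over `ex-ats(Π₁) ∪ ex-ats(Π₂)` with `I|X = J` and `I ⊨_p Π₁ ∪ Π₂`
    (where `X = ex-ats(Π₁) ∩ ex-ats(Π₂)`) and the pairs of corresponding WVIs for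
    `Π₁` and `Π₂`; consequently the count for the union is the product of the counts. -/

theorem join_product_decomposition (P1 P2 : Set (ERule α))
    (hwf1 : WfELP P1) (hwf2 : WfELP P2)
    (hfin1 : (elpExats P1).Finite) (hfin2 : (elpExats P2).Finite)
    (J : Set (Lit α)) (hJ : IsWVI (elpExats P1 ∩ elpExats P2) J) :
    Set.BijOn
      (fun I => (restrict I (elpExats P1), restrict I (elpExats P2)))
      { I : Set (Lit α) | IsWVI (elpExats P1 ∪ elpExats P2) I ∧
          restrict I (elpExats P1 ∩ elpExats P2) = J ∧ PlausibleFor (P1 ∪ P2) I }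
      ({ I1 : Set (Lit α) | IsWVI (elpExats P1) I1 ∧
          restrict I1 (elpExats P1 ∩ elpExats P2) = J ∧ PlausibleFor P1 I1 } ×ˢ
       { I2 : Set (Lit α) | IsWVI (elpExats P2) I2 ∧
          restrict I2 (elpExats P1 ∩ elpExats P2) = J ∧ PlausibleFor P2 I2 }) ∧
    { I : Set (Lit α) | IsWVI (elpExats P1 ∪ elpExats P2) I ∧
        restrict I (elpExats P1 ∩ elpExats P2) = J ∧
        PlausibleFor (P1 ∪ P2) I }.ncard =
      { I1 : Set (Lit α) | IsWVI (elpExats P1) I1 ∧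
          restrict I1 (elpExats P1 ∩ elpExats P2) = J ∧
          PlausibleFor P1 I1 }.ncard *
      { I2 : Set (Lit α) | IsWVI (elpExats P2) I2 ∧
          restrict I2 (elpExats P1 ∩ elpExats P2) = J ∧
          PlausibleFor P2 I2 }.ncard := by
  have hplU := plausible_union hwf1 hwf2
  have hr1 : ∀ I : Set (Lit α), PlausibleFor P1 (restrict I (elpExats P1)) ↔
      PlausibleFor P1 I := fun I => plausible_restrict I subset_rfl
  have hr2 : ∀ I : Set (Lit α), PlausibleFor P2 (restrict I (elpExats P2)) ↔
      PlausibleFor P2 I := fun I => plausible_restrict I subset_rfl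
  have hbij : Set.BijOn
      (fun I => (restrict I (elpExats P1), restrict I (elpExats P2)))
      { I : Set (Lit α) | IsWVI (elpExats P1 ∪ elpExats P2) I ∧
          restrict I (elpExats P1 ∩ elpExats P2) = J ∧ PlausibleFor (P1 ∪ P2) I }
      ({ I1 : Set (Lit α) | IsWVI (elpExats P1) I1 ∧
          restrict I1 (elpExats P1 ∩ elpExats P2) = J ∧ PlausibleFor P1 I1 } ×ˢ
       { I2 : Set (Lit α) | IsWVI (elpExats P2) I2 ∧
          restrict I2 (elpExats P1 ∩ elpExats P2) = J ∧ PlausibleFor P2 I2 }) := by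
    refine ⟨?_, ?_, ?_⟩
    · -- MapsTo
      rintro I ⟨hwvi, hres, hpl⟩
      rw [hplU] at hpl
      constructor
      · refine ⟨⟨fun l hl => hl.2, fun a ha => hwvi.2 a ⟨ha.1.1, ha.2.1⟩⟩, ?_, ?_⟩
        · rw [restrict_restrict, Set.inter_eq_right.mpr Set.inter_subset_left, hres]
        · exact (hr1 I).mpr hpl.1
      · refine ⟨⟨fun l hl => hl.2, fun a ha => hwvi.2 a ⟨ha.1.1, ha.2.1⟩⟩, ?_, ?_⟩
        · rw [restrict_restrict, Set.inter_eq_right.mpr Set.inter_subset_right, hres]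
        · exact (hr2 I).mpr hpl.2
    · -- InjOn
      rintro I ⟨hI, -, -⟩ I' ⟨hI', -, -⟩ heq
      simp only [Prod.mk.injEq] at heq
      have hdec : ∀ K : Set (Lit α), IsWVI (elpExats P1 ∪ elpExats P2) K →
          K = restrict K (elpExats P1) ∪ restrict K (elpExats P2) := by
        intro K hK
        ext l
        simp only [Set.mem_union, mem_restrict']
        constructor
        · intro hl
          rcases hK.1 l hl with h | h
          exacts [Or.inl ⟨hl, h⟩, Or.inr ⟨hl, h⟩]
        · rintro (⟨h, -⟩ | ⟨h, -⟩) <;> exact h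
      rw [hdec I hI, hdec I' hI', heq.1, heq.2]
    · -- SurjOn
      rintro ⟨I1, I2⟩ ⟨⟨hw1, hres1, hpl1⟩, ⟨hw2, hres2, hpl2⟩⟩
      have heq1 : restrict (I1 ∪ I2) (elpExats P1) = I1 := by
        rw [restrict_union, restrict_eq_self hw1.1, Set.union_eq_left]
        rintro l ⟨hl, hlA1⟩
        have hX : l ∈ restrict I2 (elpExats P1 ∩ elpExats P2) :=
          ⟨hl, hlA1, hw2.1 l hl⟩
        rw [hres2, ← hres1] at hX
        exact hX.1
      have heq2 : restrict (I1 ∪ I2) (elpExats P2) = I2 := by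
        rw [restrict_union, restrict_eq_self hw2.1, Set.union_eq_right]
        rintro l ⟨hl, hlA2⟩
        have hX : l ∈ restrict I1 (elpExats P1 ∩ elpExats P2) :=
          ⟨hl, hw1.1 l hl, hlA2⟩
        rw [hres1, ← hres2] at hX
        exact hX.1
      refine ⟨I1 ∪ I2, ⟨⟨?_, ?_⟩, ?_, ?_⟩, ?_⟩
      · rintro l (hl | hl)
        exacts [Or.inl (hw1.1 l hl), Or.inr (hw2.1 l hl)]
      · rintro a ⟨ht, hf⟩
        have hcross : ∀ b c : Set (Lit α), IsWVI (elpExats P1) b →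
            IsWVI (elpExats P2) c →
            restrict b (elpExats P1 ∩ elpExats P2) = J →
            restrict c (elpExats P1 ∩ elpExats P2) = J →
            (a, true) ∈ b → (a, false) ∈ c → False := by
          intro b c hb hc hrb hrc hab hac
          have hax : a ∈ elpExats P1 ∩ elpExats P2 :=
            ⟨hb.1 _ hab, hc.1 _ hac⟩
          have h1 : (a, true) ∈ J := by rw [← hrb]; exact ⟨hab, hax⟩
          have h2 : (a, false) ∈ J := by rw [← hrc]; exact ⟨hac, hax⟩
          exact hJ.2 a ⟨h1, h2⟩
        rcases ht with ht | ht <;> rcases hf with hf | hf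
        · exact hw1.2 a ⟨ht, hf⟩
        · exact hcross I1 I2 hw1 hw2 hres1 hres2 ht hf
        · -- (a,true) ∈ I2, (a,false) ∈ I1
          have hax : a ∈ elpExats P1 ∩ elpExats P2 :=
            ⟨hw1.1 _ hf, hw2.1 _ ht⟩
          have h1 : (a, true) ∈ J := by rw [← hres2]; exact ⟨ht, hax⟩
          have h2 : (a, false) ∈ J := by rw [← hres1]; exact ⟨hf, hax⟩
          exact hJ.2 a ⟨h1, h2⟩
        · exact hw2.2 a ⟨ht, hf⟩
      · rw [restrict_union, hres1, hres2, Set.union_self]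
      · rw [hplU]
        constructor
        · rw [← hr1 (I1 ∪ I2), heq1]; exact hpl1
        · rw [← hr2 (I1 ∪ I2), heq2]; exact hpl2
      · simp only [heq1, heq2]
  refine ⟨hbij, ?_⟩
  calc
    ({ I : Set (Lit α) | IsWVI (elpExats P1 ∪ elpExats P2) I ∧
        restrict I (elpExats P1 ∩ elpExats P2) = J ∧
        PlausibleFor (P1 ∪ P2) I }).ncard
      = ((fun I => (restrict I (elpExats P1), restrict I (elpExats P2))) ''
          { I : Set (Lit α) | IsWVI (elpExats P1 ∪ elpExats P2) I ∧
            restrict I (elpExats P1 ∩ elpExats P2) = J ∧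
            PlausibleFor (P1 ∪ P2) I }).ncard :=
        (Set.ncard_image_of_injOn hbij.injOn).symm
    _ = ({ I1 : Set (Lit α) | IsWVI (elpExats P1) I1 ∧
          restrict I1 (elpExats P1 ∩ elpExats P2) = J ∧ PlausibleFor P1 I1 } ×ˢ
         { I2 : Set (Lit α) | IsWVI (elpExats P2) I2 ∧
          restrict I2 (elpExats P1 ∩ elpExats P2) = J ∧
          PlausibleFor P2 I2 }).ncard := by rw [hbij.image_eq]
    _ = _ := by
        rw [← Nat.card_coe_set_eq, ← Nat.card_coe_set_eq,
          ← Nat.card_coe_set_eq, Nat.card_congr (Equiv.Set.prod _ _),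
          Nat.card_prod]


end ELP
end
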